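/- arXiv:2211.16966 — 3 statements merged into one kernel-verified Lean document; each statement's English description precedes it below -/
import Mathlib

section
/- A graph is uniformly 2-connected if and only if it is a cycle (on at least three vertices). -/
open SimpleGraph

/-- The degree of a vertex, as the cardinality of its neighbor set. -/
noncomputable def vdeg {V : Type*} (G : SimpleGraph V) (v : V) : ℕ :=
  (G.neighborSet v).ncard

/-- The minimum degree of a graph. -/
noncomputable def minDeg {V : Type*} (G : SimpleGraph V) : ℕ :=
  sInf (Set.range (vdeg G))

/-- `ν(G)`: the number of vertices of minimum degree. -/
noncomputable def nu {V : Type*} (G : SimpleGraph V) : ℕ :=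
  {v | vdeg G v = minDeg G}.ncard

/-- A family of `m` pairwise independent (i.e. internally vertex-disjoint, pairwise distinct)
paths from `u` to `v`. -/
def IsIndepPathFamily {V : Type*} (G : SimpleGraph V) {u v : V} {m : ℕ}
    (W : Fin m → G.Walk u v) : Prop :=
  (∀ i, (W i).IsPath) ∧ Function.Injective W ∧
    ∀ i j, i ≠ j → ∀ x, x ∈ (W i).support → x ∈ (W j).support → x = u ∨ x = v

/-- A graph on at least `k+1` vertices is uniformly `k`-connected if each pair of its vertices
is connected by `k` and not more than `k` independent paths. -/
def UniformlyConnected (k : ℕ) {V : Type*} [Fintype V] (G : SimpleGraph V) : Prop :=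
  k + 1 ≤ Fintype.card V ∧
    ∀ u v : V, u ≠ v →
      (∃ W : Fin k → G.Walk u v, IsIndepPathFamily G W) ∧
      ∀ m : ℕ, (∃ W : Fin m → G.Walk u v, IsIndepPathFamily G W) → m ≤ k

/-- `k`-connected: more than `k` vertices, and still connected after deleting any fewer
than `k` vertices. -/
def KConnected (k : ℕ) {V : Type*} [Fintype V] (G : SimpleGraph V) : Prop :=
  k < Fintype.card V ∧
    ∀ S : Finset V, S.card < k → (G.induce {v : V | v ∉ S}).Connected

section Aux

variable {V : Type*} {G : SimpleGraph V}

/-- A two-element independent path family. -/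
lemma indep2 {u v : V} {A B : G.Walk u v}
    (hA : A.IsPath) (hB : B.IsPath) (hAB : A ≠ B)
    (hd : ∀ x, x ∈ A.support → x ∈ B.support → x = u ∨ x = v) :
    IsIndepPathFamily G ![A, B] := by
  refine ⟨?_, ?_, ?_⟩
  · intro i; fin_cases i <;> simpa
  · intro i j hij
    fin_cases i <;> fin_cases j <;> simp_all
  · intro i j hij x hxi hxj
    fin_cases i <;> fin_cases j <;>
      simp only [Matrix.cons_val_zero, Matrix.cons_val_one, Matrix.head_cons] at hxi hxj ⊢
    · exact absurd rfl hij
    · exact hd x hxi hxj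
    · exact hd x hxj hxi
    · exact absurd rfl hij

/-- A three-element independent path family. -/
lemma indep3 {u v : V} {A B C : G.Walk u v}
    (hA : A.IsPath) (hB : B.IsPath) (hC : C.IsPath)
    (hAB : A ≠ B) (hAC : A ≠ C) (hBC : B ≠ C)
    (dAB : ∀ x, x ∈ A.support → x ∈ B.support → x = u ∨ x = v)
    (dAC : ∀ x, x ∈ A.support → x ∈ C.support → x = u ∨ x = v)
    (dBC : ∀ x, x ∈ B.support → x ∈ C.support → x = u ∨ x = v) :
    IsIndepPathFamily G ![A, B, C] := by
  refine ⟨?_, ?_, ?_⟩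
  · intro i; fin_cases i <;> simpa
  · intro i j hij
    fin_cases i <;> fin_cases j <;> simp_all
  · intro i j hij x hxi hxj
    fin_cases i <;> fin_cases j <;>
      simp only [Matrix.cons_val_zero, Matrix.cons_val_one, Matrix.head_cons,
        Matrix.cons_val_two, Matrix.tail_cons] at hxi hxj ⊢
    · exact absurd rfl hij
    · exact dAB x hxi hxj
    · exact dAC x hxi hxj
    · exact dAB x hxj hxi
    · exact absurd rfl hij
    · exact dBC x hxi hxj
    · exact dAC x hxj hxi
    · exact dBC x hxj hxi
    · exact absurd rfl hij

/-- A path from `u` to `v` whose second vertex is `v` is the single edge. -/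
lemma path_eq_edge {u v : V} {p : G.Walk u v} (hp : p.IsPath) (h : G.Adj u v)
    (h1 : p.getVert 1 = v) : p = Walk.cons h Walk.nil := by
  obtain ⟨b, hb, q, rfl⟩ := Walk.exists_eq_cons_of_ne h.ne p
  rw [Walk.getVert_cons_succ, Walk.getVert_zero] at h1
  subst h1
  rw [Walk.cons_isPath_iff] at hp
  rw [Walk.isPath_iff_eq_nil.mp hp.1]

/-- Any independent path family from `u` to `v ≠ u` has at most `deg u` members. -/
lemma indep_le_vdeg [Fintype V] {u v : V} (huv : u ≠ v)
    {m : ℕ} {W : Fin m → G.Walk u v} (hW : IsIndepPathFamily G W) : m ≤ vdeg G u := by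
  classical
  set b : Fin m → V := fun i => (W i).getVert 1 with hbdef
  have hnn : ∀ i, ¬(W i).Nil := fun i => Walk.not_nil_of_ne huv
  have hb : ∀ i, G.Adj u (b i) := fun i => (W i).adj_snd (hnn i)
  have hlen : ∀ i, 1 ≤ (W i).length := fun i => Walk.not_nil_iff_lt_length.mp (hnn i)
  have hmem : ∀ i, b i ∈ (W i).support := by
    intro i
    rw [Walk.mem_support_iff_exists_getVert]
    exact ⟨1, rfl, hlen i⟩
  have hbinj : Function.Injective b := by
    intro i j hbij
    by_contra hne
    have h2 : b i ∈ (W j).support := hbij ▸ hmem j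
    rcases hW.2.2 i j hne (b i) (hmem i) h2 with h | h
    · exact G.irrefl (h ▸ hb i)
    · have hadj : G.Adj u v := h ▸ hb i
      have hi : W i = Walk.cons hadj Walk.nil := path_eq_edge (hW.1 i) hadj h
      have hj : W j = Walk.cons hadj Walk.nil := path_eq_edge (hW.1 j) hadj (hbij.symm.trans h)
      exact hne (hW.2.1 (hi.trans hj.symm))
  have hcard : (Finset.univ.image b).card = m := by
    rw [Finset.card_image_of_injective _ hbinj, Finset.card_univ, Fintype.card_fin]
  have hsub : Finset.univ.image b ⊆ (G.neighborSet u).toFinset := by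
    intro x hx
    rw [Finset.mem_image] at hx
    obtain ⟨i, _, rfl⟩ := hx
    rw [Set.mem_toFinset]
    exact hb i
  calc m = (Finset.univ.image b).card := hcard.symm
    _ ≤ (G.neighborSet u).toFinset.card := Finset.card_le_card hsub
    _ = vdeg G u := by rw [vdeg, Set.ncard_eq_toFinset_card']

/-- If a path starts with the edge `s(u,x)`, then `x` is its second vertex. -/
lemma isPath_first_edge {u v x : V} {p : G.Walk u v} (hp : p.IsPath)
    (he : s(u, x) ∈ p.edges) : ∃ (h : G.Adj u x) (q : G.Walk x v), p = Walk.cons h q := by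
  cases p with
  | nil => simp at he
  | @cons _ y _ h q =>
    rw [Walk.edges_cons, List.mem_cons] at he
    rcases he with he | he
    · obtain rfl : x = y := (Sym2.congr_right).mp he
      exact ⟨h, q, rfl⟩
    · exact absurd (Walk.fst_mem_support_of_mem_edges q he)
        ((Walk.cons_isPath_iff h q).mp hp).2

/-- First vertex of a walk belonging to a set `S` that contains the endpoint. -/
lemma exists_first_hit (S : Set V) {c a : V} (R : G.Walk c a) (ha : a ∈ S) :
    ∃ (w : V) (R' : G.Walk c w), w ∈ S ∧ (∀ x ∈ R'.support, x ∈ R.support) ∧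
      (∀ x ∈ R'.support, x ∈ S → x = w) ∧ (R.IsPath → R'.IsPath) := by
  classical
  induction R with
  | nil =>
    exact ⟨_, Walk.nil, ha, by simp, by simp, fun h => h⟩
  | @cons c y a h q ih =>
    by_cases hc : c ∈ S
    · refine ⟨c, Walk.nil, hc, by simp, by simp, fun _ => Walk.IsPath.nil⟩
    · obtain ⟨w, R', hw, hsub, hfirst, hpath⟩ := ih ha
      refine ⟨w, Walk.cons h R', hw, ?_, ?_, ?_⟩
      · intro x hx
        rw [Walk.support_cons, List.mem_cons] at hx
        rw [Walk.support_cons]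
        rcases hx with rfl | hx
        · exact List.mem_cons_self
        · exact List.mem_cons_of_mem _ (hsub x hx)
      · intro x hx hxS
        rw [Walk.support_cons, List.mem_cons] at hx
        rcases hx with rfl | hx
        · exact absurd hxS hc
        · exact hfirst x hx hxS
      · intro hP
        rw [Walk.cons_isPath_iff] at hP ⊢
        exact ⟨hpath hP.1, fun hmem => hP.2 (hsub c hmem)⟩

lemma list_eq_singleton {α : Type*} {l : List α} {a : α} (h1 : a ∈ l)
    (h2 : ∀ x ∈ l, x = a) (h3 : l.Nodup) : l = [a] := by
  cases l with
  | nil => simp at h1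
  | cons x xs =>
    obtain rfl : x = a := h2 x (by simp)
    rw [List.nodup_cons] at h3
    have hxs : xs = [] := by
      rw [List.eq_nil_iff_forall_not_mem]
      intro y hy
      exact h3.1 ((h2 y (by simp [hy])) ▸ hy)
    rw [hxs]

/-- The two arcs of a cycle between its basepoint `u` and any other support vertex `w`. -/
lemma cycle_arcs {u : V} {c : G.Walk u u} (hc : c.IsCycle)
    {w : V} (hw : w ∈ c.support) (hwu : w ≠ u) :
    ∃ (A B : G.Walk u w), A.IsPath ∧ B.IsPath ∧ A ≠ B ∧
      (∀ x ∈ A.support, x ∈ c.support) ∧ (∀ x ∈ B.support, x ∈ c.support) ∧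
      (∀ x ∈ A.support, x ∈ B.support → x = u ∨ x = w) ∧
      (∀ e ∈ A.edges, e ∈ c.edges) ∧ (∀ e ∈ B.edges, e ∈ c.edges) := by
  classical
  set A := c.takeUntil w hw with hA
  set D := c.dropUntil w hw with hD
  have hspec : A.append D = c := c.take_spec hw
  have hsupp : c.support = A.support ++ D.support.tail := by
    rw [← hspec, Walk.support_append]
  set t₁ := A.support.tail with ht₁
  set t₂ := D.support.tail with ht₂
  have hAsupp : A.support = u :: t₁ := A.support_eq_cons
  have hDsupp : D.support = w :: t₂ := D.support_eq_cons
  have htail : c.support.tail = t₁ ++ t₂ := by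
    rw [hsupp, hAsupp]; rfl
  have hnd : (t₁ ++ t₂).Nodup := htail ▸ hc.support_nodup
  obtain ⟨nd₁, nd₂, disj⟩ := List.nodup_append'.mp hnd
  have hu2 : u ∈ t₂ := by
    have := D.end_mem_support
    rw [hDsupp, List.mem_cons] at this
    exact this.resolve_left (Ne.symm hwu)
  have hw1 : w ∈ t₁ := by
    have := A.end_mem_support
    rw [hAsupp, List.mem_cons] at this
    exact this.resolve_left hwu
  have hu1 : u ∉ t₁ := fun h => disj h hu2
  have hw2 : w ∉ t₂ := fun h => disj hw1 h
  have hApath : A.IsPath := by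
    rw [Walk.isPath_def, hAsupp, List.nodup_cons]
    exact ⟨hu1, nd₁⟩
  have hBpath : D.reverse.IsPath := by
    rw [Walk.isPath_def, Walk.support_reverse, List.nodup_reverse, hDsupp, List.nodup_cons]
    exact ⟨hw2, nd₂⟩
  have hmemA : ∀ x, x ∈ A.support ↔ (x = u ∨ x ∈ t₁) := by
    intro x; rw [hAsupp]; simp
  have hmemB : ∀ x, x ∈ D.reverse.support ↔ (x = w ∨ x ∈ t₂) := by
    intro x; rw [Walk.support_reverse, List.mem_reverse, hDsupp]; simp
  have hdisj : ∀ x ∈ A.support, x ∈ D.reverse.support → x = u ∨ x = w := by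
    intro x hxA hxB
    rcases (hmemA x).mp hxA with rfl | hx1
    · exact Or.inl rfl
    · rcases (hmemB x).mp hxB with rfl | hx2
      · exact Or.inr rfl
      · exact absurd hx2 (disj hx1)
  have hsubA : ∀ x ∈ A.support, x ∈ c.support := fun x hx => c.support_takeUntil_subset hw hx
  have hsubB : ∀ x ∈ D.reverse.support, x ∈ c.support := by
    intro x hx
    rw [Walk.support_reverse, List.mem_reverse] at hx
    exact c.support_dropUntil_subset hw hx
  have hne : A ≠ D.reverse := by
    intro heq
    have hallt₁ : ∀ x ∈ t₁, x = w := by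
      intro x hx
      have hxB : x ∈ D.reverse.support := by
        rw [← heq, hAsupp]; exact List.mem_cons_of_mem _ hx
      rcases (hmemB x).mp hxB with rfl | hx2
      · rfl
      · exact absurd hx2 (disj hx)
    have hallt₂ : ∀ x ∈ t₂, x = u := by
      intro x hx
      have hxB : x ∈ D.reverse.support := (hmemB x).mpr (Or.inr hx)
      rw [← heq] at hxB
      rcases (hmemA x).mp hxB with rfl | hx1
      · rfl
      · exact absurd hx (disj hx1)
    have ht₁eq : t₁ = [w] := list_eq_singleton hw1 hallt₁ nd₁
    have ht₂eq : t₂ = [u] := list_eq_singleton hu2 hallt₂ nd₂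
    have hlen : c.support.length = c.length + 1 := c.length_support
    rw [hsupp, hAsupp, ht₁eq, ht₂eq] at hlen
    have := hc.three_le_length
    simp at hlen
    omega
  refine ⟨A, D.reverse, hApath, hBpath, hne, hsubA, hsubB, hdisj, ?_, ?_⟩
  · exact fun e he => c.edges_takeUntil_subset hw he
  · intro e he
    rw [Walk.edges_reverse, List.mem_reverse] at he
    exact c.edges_dropUntil_subset hw he

/-- In a closed non-nil walk, support membership equals tail-support membership. -/
lemma mem_support_iff_mem_tail {a : V} {p : G.Walk a a} (hnn : ¬p.Nil) {y : V} :
    y ∈ p.support ↔ y ∈ p.support.tail := by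
  obtain ⟨x, h, q, rfl⟩ := Walk.not_nil_iff.mp hnn
  rw [Walk.support_cons, List.mem_cons]
  constructor
  · intro hy
    rcases hy with rfl | hy
    · exact q.end_mem_support
    · exact hy
  · exact fun hy => Or.inr hy

lemma mem_support_rotate_iff [DecidableEq V] {x₀ x y : V} {c : G.Walk x₀ x₀} (hnn : ¬c.Nil)
    (hx : x ∈ c.support) :
    y ∈ (c.rotate x hx).support ↔ y ∈ c.support := by
  have hrot := c.support_rotate x hx
  have hlen : (c.rotate x hx).support.tail.length = c.support.tail.length :=
    hrot.perm.length_eq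
  have hnnr : ¬(c.rotate x hx).Nil := by
    rw [Walk.not_nil_iff_lt_length] at hnn ⊢
    have h1 : c.support.tail.length = c.length := by
      have := c.length_support; simp [List.length_tail, this]
    have h2 : (c.rotate x hx).support.tail.length = (c.rotate x hx).length := by
      have := (c.rotate x hx).length_support
      simp [List.length_tail, this]
    omega
  rw [mem_support_iff_mem_tail hnn, mem_support_iff_mem_tail hnnr, hrot.perm.mem_iff]

/-- Every edge at a degree-two vertex of a cycle lies on the cycle. -/
lemma cycle_edge_of_adj [Fintype V] {x : V} {C : G.Walk x x}
    (hC : C.IsCycle) (hdeg : vdeg G x = 2) {y : V} (hxy : G.Adj x y) : s(x, y) ∈ C.edges := by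
  classical
  have hlen := hC.three_le_length
  have hnn : ¬C.Nil := by rw [Walk.not_nil_iff_lt_length]; omega
  obtain ⟨n₁, h₁, q₁, hq₁⟩ := Walk.not_nil_iff.mp hnn
  have hCyc := hC
  rw [hq₁, Walk.cons_isCycle_iff] at hCyc
  obtain ⟨hq₁path, hq₁edge⟩ := hCyc
  have hq₁len : 2 ≤ q₁.length := by
    have : C.length = q₁.length + 1 := by rw [hq₁]; simp [Walk.length_cons]
    omega
  have hnnr : ¬q₁.reverse.Nil := by
    rw [Walk.not_nil_iff_lt_length, Walk.length_reverse]; omega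
  obtain ⟨n₂, h₂, q₂, hq₂⟩ := Walk.not_nil_iff.mp hnnr
  have he₁ : s(x, n₁) ∈ C.edges := by
    rw [hq₁, Walk.edges_cons]; exact List.mem_cons_self
  have he₂ : s(x, n₂) ∈ C.edges := by
    have hmem : s(x, n₂) ∈ q₁.reverse.edges := by
      rw [hq₂, Walk.edges_cons]; exact List.mem_cons_self
    rw [Walk.edges_reverse, List.mem_reverse] at hmem
    rw [hq₁, Walk.edges_cons]
    exact List.mem_cons_of_mem _ hmem
  have hne : n₁ ≠ n₂ := by
    rintro rfl
    have hq₂path : q₂.IsPath := by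
      have := hq₁path.reverse
      rw [hq₂, Walk.cons_isPath_iff] at this
      exact this.1
    have : q₂ = Walk.nil := Walk.isPath_iff_eq_nil.mp hq₂path
    have hlen1 : q₁.reverse.length = 1 := by rw [hq₂, this]; simp
    rw [Walk.length_reverse] at hlen1
    omega
  have hsub : ({n₁, n₂} : Set V) ⊆ G.neighborSet x := by
    intro z hz
    simp only [Set.mem_insert_iff, Set.mem_singleton_iff] at hz
    rcases hz with rfl | rfl
    · exact h₁
    · exact h₂
  have heq : ({n₁, n₂} : Set V) = G.neighborSet x := by
    apply Set.eq_of_subset_of_ncard_le hsub _ (Set.toFinite _)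
    rw [Set.ncard_pair hne]
    exact le_of_eq hdeg
  have hy : y ∈ ({n₁, n₂} : Set V) := by rw [heq]; exact hxy
  simp only [Set.mem_insert_iff, Set.mem_singleton_iff] at hy
  rcases hy with rfl | rfl
  · exact he₁
  · exact he₂

lemma adj_mem_cycle_support [Fintype V] {x₀ : V} {c : G.Walk x₀ x₀} (hc : c.IsCycle)
    (hdeg : ∀ v, vdeg G v = 2) {x y : V} (hx : x ∈ c.support) (hxy : G.Adj x y) :
    y ∈ c.support := by
  classical
  have hC : (c.rotate x hx).IsCycle := hc.rotate hx
  have he := cycle_edge_of_adj hC (hdeg x) hxy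
  have hy : y ∈ (c.rotate x hx).support := Walk.snd_mem_support_of_mem_edges _ he
  rwa [mem_support_rotate_iff hc.not_nil hx] at hy

end Aux

section Main

variable {V : Type} [Fintype V] {G : SimpleGraph V}

/-- In a uniformly 2-connected graph every vertex has degree at most 2. -/
lemma forward_deg_le (h : UniformlyConnected 2 G) (u : V) : vdeg G u ≤ 2 := by
  classical
  by_contra hgt
  push_neg at hgt
  have hne : (G.neighborSet u).Nonempty :=
    Set.nonempty_of_ncard_ne_zero (by rw [vdeg] at hgt; omega)
  obtain ⟨a, ha : G.Adj u a⟩ := hne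
  have hua : u ≠ a := G.ne_of_adj ha
  obtain ⟨⟨W, hW⟩, hmax⟩ := h.2 u a hua
  set E : G.Walk u a := Walk.cons ha Walk.nil with hE
  have hEpath : E.IsPath := by
    rw [hE, Walk.cons_isPath_iff]
    exact ⟨Walk.IsPath.nil, by simp [hua]⟩
  have hEsupp : E.support = [u, a] := rfl
  have hW01 : W 0 ≠ W 1 := fun heq => absurd (hW.2.1 heq) (by decide)
  have hone : W 0 = E ∨ W 1 = E := by
    by_contra hcon
    push_neg at hcon
    have fam := indep3 (hW.1 0) (hW.1 1) hEpath hW01 hcon.1 hcon.2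
      (fun x hx hy => hW.2.2 0 1 (by decide) x hx hy)
      (fun x _ hy => by rw [hEsupp] at hy; simpa using hy)
      (fun x _ hy => by rw [hEsupp] at hy; simpa using hy)
    exact absurd (hmax 3 ⟨_, fam⟩) (by norm_num)
  obtain ⟨P, hPpath, hPne⟩ : ∃ P : G.Walk u a, P.IsPath ∧ P ≠ E := by
    rcases hone with h1 | h1
    · exact ⟨W 1, hW.1 1, fun heq => hW01 (h1.trans heq.symm)⟩
    · exact ⟨W 0, hW.1 0, fun heq => hW01 (heq.trans h1.symm)⟩
  obtain ⟨b, hb, q, hq⟩ := Walk.exists_eq_cons_of_ne hua P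
  have hba : b ≠ a := by
    rintro rfl
    have hqpath : q.IsPath := by
      rw [hq, Walk.cons_isPath_iff] at hPpath; exact hPpath.1
    have : q = Walk.nil := Walk.isPath_iff_eq_nil.mp hqpath
    exact hPne (by rw [hq, this])
  have hbu : b ≠ u := fun heq => G.irrefl (heq ▸ hb)
  have hsndP : ∀ z : V, s(u, z) ∈ P.edges → z = b := by
    intro z hz
    obtain ⟨h', q', hq'⟩ := isPath_first_edge hPpath hz
    have : P.getVert 1 = z := by rw [hq', Walk.getVert_cons_succ, Walk.getVert_zero]
    rw [hq, Walk.getVert_cons_succ, Walk.getVert_zero] at this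
    exact this.symm
  have hPedge : s(u, a) ∉ P.edges := fun hmem => hba ((hsndP a hmem).symm ▸ rfl)
  -- the cycle through u
  set C : G.Walk u u := Walk.cons ha P.reverse with hC
  have hCcyc : C.IsCycle := by
    rw [hC, Walk.cons_isCycle_iff]
    refine ⟨hPpath.reverse, ?_⟩
    rw [Walk.edges_reverse, List.mem_reverse]
    exact hPedge
  have hCsupp : ∀ x, x ∈ C.support ↔ x ∈ P.support := by
    intro x
    rw [hC, Walk.support_cons, Walk.support_reverse, List.mem_cons]
    constructor
    · intro hx
      rcases hx with rfl | hx
      · exact P.start_mem_support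
      · exact List.mem_reverse.mp hx
    · intro hx
      exact Or.inr (List.mem_reverse.mpr hx)
  have hCedges : ∀ z : V, z ≠ a → z ≠ b → s(u, z) ∉ C.edges := by
    intro z hza hzb hmem
    rw [hC, Walk.edges_cons, List.mem_cons] at hmem
    rcases hmem with hmem | hmem
    · exact hza (Sym2.congr_right.mp hmem)
    · rw [Walk.edges_reverse, List.mem_reverse] at hmem
      exact hzb (hsndP z hmem)
  -- pick a third neighbor c
  have hnsub : ¬(G.neighborSet u ⊆ {a, b}) := by
    intro hsub
    have h1 := Set.ncard_le_ncard hsub (Set.toFinite _)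
    have h2 : ({a, b} : Set V).ncard ≤ 2 := by
      refine le_trans (Set.ncard_insert_le _ _) ?_
      simp [Set.ncard_singleton]
    rw [vdeg] at hgt
    omega
  obtain ⟨cc, hccN : G.Adj u cc, hccab⟩ := Set.not_subset.mp hnsub
  have hcca : cc ≠ a := fun heq => hccab (by rw [heq]; simp)
  have hccb : cc ≠ b := fun heq => hccab (by rw [heq]; simp)
  have hucc : u ≠ cc := G.ne_of_adj hccN
  have hEcc : s(u, cc) ∉ C.edges := hCedges cc hcca hccb
  by_cases hmemC : cc ∈ C.support
  · -- cc on the cycle: two arcs plus the edge give three paths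
    obtain ⟨A, B, hApath, hBpath, hAB, hsubA, hsubB, hdisj, heA, heB⟩ :=
      cycle_arcs hCcyc hmemC (Ne.symm hucc)
    set Ec : G.Walk u cc := Walk.cons hccN Walk.nil with hEc
    have hEcpath : Ec.IsPath := by
      rw [hEc, Walk.cons_isPath_iff]
      exact ⟨Walk.IsPath.nil, by simp [hucc]⟩
    have hEcsupp : Ec.support = [u, cc] := rfl
    have hEcA : A ≠ Ec := by
      intro heq
      apply hEcc
      apply heA
      rw [heq, hEc]
      simp
    have hEcB : B ≠ Ec := by
      intro heq
      apply hEcc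
      apply heB
      rw [heq, hEc]
      simp
    have fam := indep3 hApath hBpath hEcpath hAB hEcA hEcB hdisj
      (fun x _ hy => by rw [hEcsupp] at hy; simpa using hy)
      (fun x _ hy => by rw [hEcsupp] at hy; simpa using hy)
    exact absurd ((h.2 u cc hucc).2 3 ⟨_, fam⟩) (by norm_num)
  · -- cc off the cycle: path from cc to the cycle avoiding u
    have hamem : a ∈ C.support := (hCsupp a).mpr P.end_mem_support
    have hcc_ne_a : cc ≠ a := hcca
    obtain ⟨⟨Q, hQ⟩, _⟩ := h.2 cc a hcc_ne_a
    have hQ01 : Q 0 ≠ Q 1 := fun heq => absurd (hQ.2.1 heq) (by decide)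
    have huQ : u ∉ (Q 0).support ∨ u ∉ (Q 1).support := by
      by_contra hcon
      push_neg at hcon
      rcases hQ.2.2 0 1 (by decide) u hcon.1 hcon.2 with h' | h'
      · exact hucc h'
      · exact hua h'
    obtain ⟨R, hRpath, hRu⟩ : ∃ R : G.Walk cc a, R.IsPath ∧ u ∉ R.support := by
      rcases huQ with h' | h'
      · exact ⟨Q 0, hQ.1 0, h'⟩
      · exact ⟨Q 1, hQ.1 1, h'⟩
    obtain ⟨w, R', hwC, hsubR, hfirst, hR'path⟩ :=
      exists_first_hit {x | x ∈ C.support} R hamem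
    have hwu : w ≠ u := fun heq => hRu (heq ▸ hsubR w R'.end_mem_support)
    obtain ⟨A, B, hApath, hBpath, hAB, hsubA, hsubB, hdisj, _, _⟩ :=
      cycle_arcs hCcyc hwC hwu
    set A₃ : G.Walk u w := Walk.cons hccN R' with hA₃
    have hA₃path : A₃.IsPath := by
      rw [hA₃, Walk.cons_isPath_iff]
      exact ⟨hR'path hRpath, fun hmem => hRu (hsubR u hmem)⟩
    have hccA₃ : cc ∈ A₃.support := by
      rw [hA₃, Walk.support_cons]
      exact List.mem_cons_of_mem _ R'.start_mem_support
    have hA₃A : A₃ ≠ A := by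
      intro heq
      exact hmemC (hsubA cc (heq ▸ hccA₃))
    have hA₃B : A₃ ≠ B := by
      intro heq
      exact hmemC (hsubB cc (heq ▸ hccA₃))
    have hdA₃ : ∀ (T : G.Walk u w), (∀ x ∈ T.support, x ∈ C.support) →
        ∀ x, x ∈ A₃.support → x ∈ T.support → x = u ∨ x = w := by
      intro T hsubT x hxA₃ hxT
      rw [hA₃, Walk.support_cons, List.mem_cons] at hxA₃
      rcases hxA₃ with rfl | hxA₃
      · exact Or.inl rfl
      · exact Or.inr (hfirst x hxA₃ (hsubT x hxT))
    have fam := indep3 hApath hBpath hA₃path hAB (Ne.symm hA₃A) (Ne.symm hA₃B) hdisj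
      (fun x hx hy => hdA₃ A hsubA x hy hx)
      (fun x hx hy => hdA₃ B hsubB x hy hx)
    exact absurd ((h.2 u w (Ne.symm hwu)).2 3 ⟨_, fam⟩) (by norm_num)

/-- Existence of two independent paths in a connected 2-regular graph. -/
lemma backward_family (hconn : G.Connected) (hdeg : ∀ v, vdeg G v = 2)
    (hcard : 3 ≤ Fintype.card V) {u v : V} (huv : u ≠ v) :
    ∃ W : Fin 2 → G.Walk u v, IsIndepPathFamily G W := by
  classical
  have hcyc : ¬G.IsAcyclic := by
    intro hac
    have htree : G.IsTree := ⟨hconn, hac⟩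
    have hdeg' : ∀ w : V, G.degree w = 2 := by
      intro w
      have h1 : vdeg G w = G.degree w := by
        rw [vdeg, Set.ncard_eq_toFinset_card', Set.toFinset_card,
          SimpleGraph.card_neighborSet_eq_degree]
      rw [← h1, hdeg w]
    have hE := htree.card_edgeFinset
    have hsum := G.sum_degrees_eq_twice_card_edges
    rw [Finset.sum_congr rfl (fun w _ => hdeg' w)] at hsum
    rw [Finset.sum_const, Finset.card_univ, smul_eq_mul] at hsum
    omega
  simp only [SimpleGraph.IsAcyclic, not_forall, not_not] at hcyc
  obtain ⟨x₀, c0, hc0⟩ := hcyc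
  have hclosed : ∀ {s t : V} (p : G.Walk s t), s ∈ c0.support → t ∈ c0.support := by
    intro s t p
    induction p with
    | nil => exact id
    | cons h q ih => exact fun hs => ih (adj_mem_cycle_support hc0 hdeg hs h)
  have hmemall : ∀ z : V, z ∈ c0.support := by
    intro z
    obtain ⟨p⟩ := hconn.preconnected x₀ z
    exact hclosed p c0.start_mem_support
  have hu : u ∈ c0.support := hmemall u
  have hC : (c0.rotate u hu).IsCycle := hc0.rotate hu
  have hv : v ∈ (c0.rotate u hu).support :=
    (mem_support_rotate_iff hc0.not_nil hu).mpr (hmemall v)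
  obtain ⟨A, B, hApath, hBpath, hAB, _, _, hdisj, _, _⟩ :=
    cycle_arcs hC hv (Ne.symm huv)
  exact ⟨![A, B], indep2 hApath hBpath hAB hdisj⟩

end Main

/-- A graph is uniformly 2-connected if and only if it is a cycle (i.e. a connected
2-regular graph) on at least three vertices. -/
theorem uniformlyTwoConnected_iff_cycle {V : Type} [Fintype V] (G : SimpleGraph V) :
    UniformlyConnected 2 G ↔ (G.Connected ∧ (∀ v, vdeg G v = 2) ∧ 3 ≤ Fintype.card V) := by
  classical
  constructor
  · intro h
    obtain ⟨hcard, hpairs⟩ := h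
    have hconn : G.Connected := by
      rw [connected_iff]
      refine ⟨?_, ?_⟩
      · intro x y
        by_cases hxy : x = y
        · exact hxy ▸ Reachable.refl x
        · obtain ⟨⟨W, _⟩, _⟩ := hpairs x y hxy
          exact ⟨W 0⟩
      · exact Fintype.card_pos_iff.mp (by omega)
    refine ⟨hconn, ?_, hcard⟩
    intro v
    refine le_antisymm (forward_deg_le ⟨hcard, hpairs⟩ v) ?_
    obtain ⟨w, hw⟩ := Fintype.exists_ne_of_one_lt_card (by omega) v
    obtain ⟨⟨W, hW⟩, _⟩ := hpairs v w (Ne.symm hw)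
    exact indep_le_vdeg (Ne.symm hw) hW
  · rintro ⟨hconn, hdeg, hcard⟩
    refine ⟨hcard, fun u v huv => ⟨backward_family hconn hdeg hcard huv, ?_⟩⟩
    intro m ⟨W, hW⟩
    calc m ≤ vdeg G u := indep_le_vdeg huv hW
      _ = 2 := hdeg u
end

section
/- For every n ≥ 4, the wheel graph W_n on n vertices is uniformly 3-connected. -/
open SimpleGraph

/-- `Wheel m` is the wheel graph on `m + 1` vertices (i.e. `W_{m+1}`): a hub `none` adjacent
to all the vertices of a cycle on the `m` rim vertices `some i`. -/
def Wheel (m : ℕ) : SimpleGraph (Option (Fin m)) :=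
  SimpleGraph.fromRel (fun p q =>
    match p, q with
    | none, some _ => True
    | some i, some j => j.val = (i.val + 1) % m
    | _, _ => False)

open scoped Fin.NatCast Fin.CommRing

namespace WheelAux

lemma IsIndepPathFamily.rev {V : Type*} {G : SimpleGraph V} {u v : V} {m : ℕ}
    {W : Fin m → G.Walk u v} (h : IsIndepPathFamily G W) :
    IsIndepPathFamily G (fun i => (W i).reverse) := by
  obtain ⟨h1, h2, h3⟩ := h
  refine ⟨fun i => (h1 i).reverse, ?_, ?_⟩
  · intro a b hab
    apply h2
    simpa using congrArg SimpleGraph.Walk.reverse hab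
  · intro a b hab x hxa hxb
    rw [Walk.support_reverse, List.mem_reverse] at hxa hxb
    exact (h3 a b hab x hxa hxb).symm

lemma walk_length_one_unique {V : Type*} {G : SimpleGraph V} {u v : V}
    {p q : G.Walk u v} (hp : p.length = 1) (hq : q.length = 1) : p = q := by
  cases p with
  | nil => simp at hp
  | cons hadj p' =>
    cases p' with
    | nil =>
      cases q with
      | nil => simp at hq
      | cons hadj' q' =>
        cases q' with
        | nil => rfl
        | cons h2 q'' => simp [Walk.length_cons] at hq
    | cons h2 p'' => simp [Walk.length_cons] at hp

lemma getVert_mem_support {V : Type*} {G : SimpleGraph V} {u v : V}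
    (p : G.Walk u v) (i : ℕ) : p.getVert i ∈ p.support := by
  induction p generalizing i with
  | nil => simp [Walk.getVert_of_length_le]
  | cons h p ih =>
    cases i with
    | zero => simp [Walk.getVert_zero]
    | succ n =>
      simp only [Walk.getVert_cons_succ, Walk.support_cons, List.mem_cons]
      exact Or.inr (ih n)

lemma length_eq_one_of_getVert_one {V : Type*} {G : SimpleGraph V} {u v : V}
    {p : G.Walk u v} (hp : p.IsPath) (huv : u ≠ v) (h1 : p.getVert 1 = v) :
    p.length = 1 := by
  cases p with
  | nil => exact absurd rfl huv
  | cons hadj p' =>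
    rw [Walk.getVert_cons_succ, Walk.getVert_zero] at h1
    subst h1
    have hp' : p'.IsPath := hp.of_cons
    have hnil : p' = Walk.nil :=
      congrArg Subtype.val (SimpleGraph.Path.loop_eq ⟨p', hp'⟩)
    subst hnil
    simp

variable {m : ℕ} [NeZero m]

lemma adj_some_some (hm : 3 ≤ m) (i j : Fin m) :
    (Wheel m).Adj (some i) (some j) ↔ j = i + 1 ∨ i = j + 1 := by
  have key : ∀ a b : Fin m, b = a + 1 ↔ b.val = (a.val + 1) % m := by
    intro a b
    rw [Fin.ext_iff, Fin.val_add, Fin.val_one']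
    simp [Nat.add_mod]
  have hne : ∀ a b : Fin m, b = a + 1 → (some a : Option (Fin m)) ≠ some b := by
    intro a b hb hc
    rw [Option.some_inj] at hc
    subst hc
    rw [left_eq_add] at hb
    have : (1 : Fin m) ≠ 0 := by
      simp [Fin.ext_iff, Fin.val_one']
      omega
    exact this hb
  rw [Wheel, fromRel_adj]
  constructor
  · rintro ⟨hne', h | h⟩
    · exact Or.inl ((key i j).mpr h)
    · exact Or.inr ((key j i).mpr h)
  · rintro (h | h)
    · exact ⟨hne _ _ h, Or.inl ((key i j).mp h)⟩
    · exact ⟨(hne _ _ h).symm, Or.inr ((key j i).mp h)⟩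

omit [NeZero m] in
lemma adj_none_some (i : Fin m) : (Wheel m).Adj none (some i) := by
  rw [Wheel, fromRel_adj]
  exact ⟨by simp, Or.inl trivial⟩

lemma adj_some_succ (hm : 3 ≤ m) (i : Fin m) : (Wheel m).Adj (some i) (some (i + 1)) :=
  (adj_some_some hm i (i+1)).mpr (Or.inl rfl)

lemma adj_some_pred (hm : 3 ≤ m) (i : Fin m) : (Wheel m).Adj (some i) (some (i - 1)) :=
  (adj_some_some hm i (i-1)).mpr (Or.inr (by ring))

lemma adj_some_iff (hm : 3 ≤ m) (i : Fin m) (x : Option (Fin m)) :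
    (Wheel m).Adj (some i) x ↔ x = none ∨ x = some (i + 1) ∨ x = some (i - 1) := by
  cases x with
  | none =>
    simp only [Option.some_ne_none, false_or, reduceCtorEq]
    constructor
    · intro _; simp
    · intro _; exact (adj_none_some i).symm
  | some j =>
    rw [adj_some_some hm]
    simp only [reduceCtorEq, Option.some_inj, false_or]
    constructor
    · rintro (h | h)
      · exact Or.inl h
      · exact Or.inr (by rw [h]; ring)
    · rintro (h | h)
      · exact Or.inl h
      · exact Or.inr (by rw [h]; ring)


end WheelAux

namespace WheelAux

variable {m : ℕ} [NeZero m]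

/-- walk going `k` steps forward along the rim -/
def walkUp (hm : 3 ≤ m) : (k : ℕ) → (i : Fin m) → (Wheel m).Walk (some i) (some (i + (k : Fin m)))
  | 0, i => Walk.nil.copy rfl (by simp)
  | k+1, i =>
    (Walk.cons (adj_some_succ hm i) (walkUp hm k (i+1))).copy rfl
      (by congr 1; push_cast; ring)

/-- walk going `k` steps backward along the rim -/
def walkDown (hm : 3 ≤ m) : (k : ℕ) → (i : Fin m) → (Wheel m).Walk (some i) (some (i - (k : Fin m)))
  | 0, i => Walk.nil.copy rfl (by simp)
  | k+1, i =>
    (Walk.cons (adj_some_pred hm i) (walkDown hm k (i-1))).copy rfl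
      (by congr 1; push_cast; ring)

lemma walkUp_length (hm : 3 ≤ m) (k : ℕ) (i : Fin m) : (walkUp hm k i).length = k := by
  induction k generalizing i with
  | zero => simp [walkUp]
  | succ n ih => simp [walkUp, ih]

lemma walkDown_length (hm : 3 ≤ m) (k : ℕ) (i : Fin m) : (walkDown hm k i).length = k := by
  induction k generalizing i with
  | zero => simp [walkDown]
  | succ n ih => simp [walkDown, ih]

lemma walkUp_support (hm : 3 ≤ m) (k : ℕ) (i : Fin m) :
    (walkUp hm k i).support = (List.range (k+1)).map (fun t : ℕ => some (i + (t : Fin m))) := by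
  induction k generalizing i with
  | zero => simp [walkUp, List.range_succ]
  | succ n ih =>
    rw [walkUp, Walk.support_copy, Walk.support_cons, ih]
    conv_rhs => rw [List.range_succ_eq_map]
    simp only [List.map_cons, List.map_map, Nat.cast_zero, add_zero]
    congr 1
    apply List.map_congr_left
    intro t _
    simp only [Function.comp_apply]
    congr 1
    push_cast
    ring

lemma walkDown_support (hm : 3 ≤ m) (k : ℕ) (i : Fin m) :
    (walkDown hm k i).support = (List.range (k+1)).map (fun t : ℕ => some (i - (t : Fin m))) := by
  induction k generalizing i with
  | zero => simp [walkDown, List.range_succ]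
  | succ n ih =>
    rw [walkDown, Walk.support_copy, Walk.support_cons, ih]
    conv_rhs => rw [List.range_succ_eq_map]
    simp only [List.map_cons, List.map_map, Nat.cast_zero, add_zero, sub_zero]
    congr 1
    apply List.map_congr_left
    intro t _
    simp only [Function.comp_apply]
    congr 1
    push_cast
    ring

lemma walkUp_isPath (hm : 3 ≤ m) (k : ℕ) (hk : k < m) (i : Fin m) :
    (walkUp hm k i).IsPath := by
  rw [Walk.isPath_def, walkUp_support]
  rw [List.nodup_map_iff_inj_on List.nodup_range]
  intro a ha b hb hab
  rw [List.mem_range] at ha hb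
  rw [Option.some_inj, add_right_inj, Fin.ext_iff, Fin.val_natCast, Fin.val_natCast,
    Nat.mod_eq_of_lt (by omega), Nat.mod_eq_of_lt (by omega)] at hab
  exact hab

lemma walkDown_isPath (hm : 3 ≤ m) (k : ℕ) (hk : k < m) (i : Fin m) :
    (walkDown hm k i).IsPath := by
  rw [Walk.isPath_def, walkDown_support]
  rw [List.nodup_map_iff_inj_on List.nodup_range]
  intro a ha b hb hab
  rw [List.mem_range] at ha hb
  rw [Option.some_inj, sub_right_inj, Fin.ext_iff, Fin.val_natCast, Fin.val_natCast,
    Nat.mod_eq_of_lt (by omega), Nat.mod_eq_of_lt (by omega)] at hab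
  exact hab

end WheelAux

namespace WheelAux

variable {m : ℕ} [NeZero m]

lemma one_ne_zero' (hm : 3 ≤ m) : (1 : Fin m) ≠ 0 := by
  have : ((1 : ℕ) : Fin m) = (1 : Fin m) := by push_cast; ring
  rw [← this, Ne, Fin.natCast_eq_zero]
  intro hdvd
  have := Nat.le_of_dvd (by norm_num) hdvd
  omega

lemma two_ne_zero' (hm : 3 ≤ m) : (2 : Fin m) ≠ 0 := by
  have : ((2 : ℕ) : Fin m) = (2 : Fin m) := by push_cast; ring
  rw [← this, Ne, Fin.natCast_eq_zero]
  intro hdvd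
  have := Nat.le_of_dvd (by norm_num) hdvd
  omega

lemma succ_ne_pred (hm : 3 ≤ m) (j : Fin m) : j + 1 ≠ j - 1 := by
  intro h
  exact two_ne_zero' hm (by linear_combination h)

lemma succ_ne_self (hm : 3 ≤ m) (j : Fin m) : j + 1 ≠ j := by
  intro h
  exact one_ne_zero' hm (by linear_combination h)

lemma pred_ne_self (hm : 3 ≤ m) (j : Fin m) : j - 1 ≠ j := by
  intro h
  exact one_ne_zero' hm (by linear_combination -h)

lemma build_family {V : Type*} {G : SimpleGraph V} {u v : V} {P0 P1 P2 : G.Walk u v}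
    (h0 : P0.IsPath) (h1 : P1.IsPath) (h2 : P2.IsPath)
    {n0 n1 n2 : Option V}
    (e0 : P0.support[1]? = n0) (e1 : P1.support[1]? = n1) (e2 : P2.support[1]? = n2)
    (hne01 : n0 ≠ n1) (hne02 : n0 ≠ n2) (hne12 : n1 ≠ n2)
    (d01 : ∀ x, x ∈ P0.support → x ∈ P1.support → x = u ∨ x = v)
    (d02 : ∀ x, x ∈ P0.support → x ∈ P2.support → x = u ∨ x = v)
    (d12 : ∀ x, x ∈ P1.support → x ∈ P2.support → x = u ∨ x = v) :
    ∃ W : Fin 3 → G.Walk u v, IsIndepPathFamily G W := by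
  refine ⟨![P0, P1, P2], fun a => ?_, ?_, ?_⟩
  · fin_cases a <;> assumption
  · intro a b hab
    have key := congrArg (fun w : G.Walk u v => w.support[1]?) hab
    beta_reduce at key
    fin_cases a <;> fin_cases b <;> simp_all
  · intro a b hab x hxa hxb
    fin_cases a <;> fin_cases b <;> simp_all

/-- the hub family : three independent paths from the hub to rim vertex `j` -/
lemma exists_family_none_some (hm : 3 ≤ m) (j : Fin m) :
    ∃ W : Fin 3 → (Wheel m).Walk none (some j), IsIndepPathFamily (Wheel m) W := by
  let Q0 : (Wheel m).Walk none (some j) := Walk.cons (adj_none_some j) Walk.nil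
  let Q1 : (Wheel m).Walk none (some j) :=
    Walk.cons (adj_none_some (j+1)) (Walk.cons ((adj_some_succ hm j).symm) Walk.nil)
  let Q2 : (Wheel m).Walk none (some j) :=
    Walk.cons (adj_none_some (j-1)) (Walk.cons ((adj_some_pred hm j).symm) Walk.nil)
  have hs0 : Q0.support = [none, some j] := rfl
  have hs1 : Q1.support = [none, some (j+1), some j] := rfl
  have hs2 : Q2.support = [none, some (j-1), some j] := rfl
  have d1 := succ_ne_self hm j
  have d2 := pred_ne_self hm j
  have d3 := succ_ne_pred hm j
  refine build_family (P0 := Q0) (P1 := Q1) (P2 := Q2)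
    (n0 := some (some j)) (n1 := some (some (j+1))) (n2 := some (some (j-1)))
    ?_ ?_ ?_ ?_ ?_ ?_ ?_ ?_ ?_ ?_ ?_ ?_
  · rw [Walk.isPath_def, hs0]; simp
  · rw [Walk.isPath_def, hs1]; simp [d1]
  · rw [Walk.isPath_def, hs2]; simp [d2]
  · rw [hs0]; rfl
  · rw [hs1]; rfl
  · rw [hs2]; rfl
  · simp only [Ne, Option.some_inj]; exact fun h => d1 h.symm
  · simp only [Ne, Option.some_inj]; exact fun h => d2 h.symm
  · simp only [Ne, Option.some_inj]; exact d3
  · intro x hxa hxb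
    rw [hs0] at hxa
    simp only [List.mem_cons, List.not_mem_nil, or_false] at hxa
    tauto
  · intro x hxa hxb
    rw [hs0] at hxa
    simp only [List.mem_cons, List.not_mem_nil, or_false] at hxa
    tauto
  · intro x hxa hxb
    rw [hs1] at hxa
    rw [hs2] at hxb
    simp only [List.mem_cons, List.not_mem_nil, or_false] at hxa hxb
    rcases hxa with h | h | h
    · subst h
      rcases hxb with h' | h' | h' <;> simp_all
    · subst h
      rcases hxb with h' | h' | h' <;> simp_all
    · exact Or.inr h

end WheelAux

namespace WheelAux

variable {m : ℕ} [NeZero m]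

lemma val_sum_eq (hm : 3 ≤ m) {i j : Fin m} (hij : i ≠ j) :
    (j - i).val + (i - j).val = m := by
  have h0 : (j - i) + (i - j) = 0 := by ring
  have hv : ((j - i).val + (i - j).val) % m = 0 := by
    rw [← Fin.val_add, h0, Fin.val_zero]
  have hd : (j - i).val ≠ 0 := by
    simp only [Ne, ← Fin.val_zero (n := m), ← Fin.ext_iff]
    exact sub_ne_zero.mpr (Ne.symm hij)
  have hd' : (i - j).val ≠ 0 := by
    simp only [Ne, ← Fin.val_zero (n := m), ← Fin.ext_iff]
    exact sub_ne_zero.mpr hij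
  have h1 : (j - i).val < m := Fin.is_lt _
  have h2 : (i - j).val < m := Fin.is_lt _
  obtain ⟨c, hc⟩ := Nat.dvd_of_mod_eq_zero hv
  rcases Nat.lt_or_ge c 2 with h | h
  · interval_cases c <;> omega
  · exfalso
    have : m * 2 ≤ m * c := Nat.mul_le_mul_left m h
    omega

/-- the rim family: three independent paths between distinct rim vertices -/
lemma exists_family_some_some (hm : 3 ≤ m) (i j : Fin m) (hij : i ≠ j) :
    ∃ W : Fin 3 → (Wheel m).Walk (some i) (some j), IsIndepPathFamily (Wheel m) W := by
  set d : Fin m := j - i with hd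
  set d' : Fin m := i - j with hd'
  have hdv : d.val ≠ 0 := by
    simp only [Ne, ← Fin.val_zero (n := m), ← Fin.ext_iff]
    exact sub_ne_zero.mpr (Ne.symm hij)
  have hd'v : d'.val ≠ 0 := by
    simp only [Ne, ← Fin.val_zero (n := m), ← Fin.ext_iff]
    exact sub_ne_zero.mpr hij
  have hsum : d.val + d'.val = m := val_sum_eq hm hij
  have hup : some (i + (d.val : Fin m)) = some j := by
    rw [Fin.cast_val_eq_self, hd]
    congr 1
    ring
  have hdown : some (i - (d'.val : Fin m)) = some j := by
    rw [Fin.cast_val_eq_self, hd']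
    congr 1
    ring
  let P0 : (Wheel m).Walk (some i) (some j) :=
    Walk.cons (adj_none_some i).symm (Walk.cons (adj_none_some j) Walk.nil)
  let P1 : (Wheel m).Walk (some i) (some j) := (walkUp hm d.val i).copy rfl hup
  let P2 : (Wheel m).Walk (some i) (some j) := (walkDown hm d'.val i).copy rfl hdown
  have hs0 : P0.support = [some i, none, some j] := rfl
  have hs1 : P1.support = (List.range (d.val+1)).map (fun t : ℕ => some (i + (t : Fin m))) := by
    rw [Walk.support_copy, walkUp_support]
  have hs2 : P2.support = (List.range (d'.val+1)).map (fun t : ℕ => some (i - (t : Fin m))) := by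
    rw [Walk.support_copy, walkDown_support]
  -- membership characterizations
  have mem1 : ∀ x, x ∈ P1.support ↔ ∃ t, t ≤ d.val ∧ x = some (i + (t : Fin m)) := by
    intro x
    rw [hs1, List.mem_map]
    constructor
    · rintro ⟨t, ht, rfl⟩
      exact ⟨t, by simpa using Nat.lt_succ_iff.mp (List.mem_range.mp ht), rfl⟩
    · rintro ⟨t, ht, rfl⟩
      exact ⟨t, List.mem_range.mpr (by omega), rfl⟩
  have mem2 : ∀ x, x ∈ P2.support ↔ ∃ t, t ≤ d'.val ∧ x = some (i - (t : Fin m)) := by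
    intro x
    rw [hs2, List.mem_map]
    constructor
    · rintro ⟨t, ht, rfl⟩
      exact ⟨t, by simpa using Nat.lt_succ_iff.mp (List.mem_range.mp ht), rfl⟩
    · rintro ⟨t, ht, rfl⟩
      exact ⟨t, List.mem_range.mpr (by omega), rfl⟩
  refine build_family (P0 := P0) (P1 := P1) (P2 := P2)
    (n0 := some none) (n1 := some (some (i+1))) (n2 := some (some (i-1)))
    ?_ ?_ ?_ ?_ ?_ ?_ ?_ ?_ ?_ ?_ ?_ ?_
  · rw [Walk.isPath_def, hs0]
    simp [hij]
  · exact (Walk.isPath_copy _ rfl hup).mpr (walkUp_isPath hm d.val (by omega) i)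
  · exact (Walk.isPath_copy _ rfl hdown).mpr (walkDown_isPath hm d'.val (by omega) i)
  · rw [hs0]; rfl
  · rw [hs1, List.getElem?_map, List.getElem?_range (by omega)]
    simp
  · rw [hs2, List.getElem?_map, List.getElem?_range (by omega)]
    simp
  · simp
  · simp
  · simp only [Ne, Option.some_inj]
    exact succ_ne_pred hm i
  · -- P0 vs P1
    intro x hxa hxb
    rw [hs0] at hxa
    simp only [List.mem_cons, List.not_mem_nil, or_false] at hxa
    rcases hxa with h | h | h
    · exact Or.inl h
    · exfalso
      subst h
      rcases (mem1 none).mp hxb with ⟨t, _, ht⟩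
      cases ht
    · exact Or.inr h
  · -- P0 vs P2
    intro x hxa hxb
    rw [hs0] at hxa
    simp only [List.mem_cons, List.not_mem_nil, or_false] at hxa
    rcases hxa with h | h | h
    · exact Or.inl h
    · exfalso
      subst h
      rcases (mem2 none).mp hxb with ⟨t, _, ht⟩
      cases ht
    · exact Or.inr h
  · -- P1 vs P2
    intro x hxa hxb
    rcases (mem1 x).mp hxa with ⟨t, ht, rfl⟩
    rcases (mem2 _).mp hxb with ⟨s, hs, heq⟩
    have heq' : (t : Fin m) + (s : Fin m) = 0 := by
      rw [Option.some_inj] at heq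
      linear_combination heq
    have hcast : (((t + s : ℕ)) : Fin m) = 0 := by push_cast; exact heq'
    rw [Fin.natCast_eq_zero] at hcast
    rcases Nat.eq_zero_or_pos (t + s) with h | h
    · left
      have ht0 : t = 0 := by omega
      subst ht0
      simp
    · right
      have hts : t + s = m := by
        have := Nat.le_of_dvd h hcast
        omega
      have ht' : t = d.val := by omega
      rw [ht', hup]

/-- upper bound: at most 3 independent paths out of a rim vertex -/
lemma bound_some (hm : 3 ≤ m) (i : Fin m) (v : Option (Fin m))
    (hv : (some i : Option (Fin m)) ≠ v) (k : ℕ)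
    (W : Fin k → (Wheel m).Walk (some i) v) (hW : IsIndepPathFamily (Wheel m) W) :
    k ≤ 3 := by
  obtain ⟨h1, h2, h3⟩ := hW
  set f : Fin k → Option (Fin m) := fun a => (W a).getVert 1 with hf
  have hlen : ∀ a, 1 ≤ (W a).length := by
    intro a
    rcases Nat.eq_zero_or_pos (W a).length with h | h
    · exact absurd (Walk.eq_of_length_eq_zero h) hv
    · omega
  have hadj : ∀ a, (Wheel m).Adj (some i) (f a) := by
    intro a
    have := (W a).adj_getVert_succ (i := 0) (by have := hlen a; omega)
    rwa [Walk.getVert_zero] at this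
  have hone : ∀ a, f a = v → (W a).length = 1 := fun a ha =>
    length_eq_one_of_getVert_one (h1 a) hv ha
  have hinj : Function.Injective f := by
    intro a b hab
    by_contra hne
    have hmem_a : f a ∈ (W a).support := getVert_mem_support _ _
    have hmem_b : f a ∈ (W b).support := hab ▸ getVert_mem_support _ _
    rcases h3 a b hne (f a) hmem_a hmem_b with h | h
    · exact (Wheel m).irrefl (h ▸ hadj a)
    · have la : (W a).length = 1 := hone a h
      have lb : (W b).length = 1 := hone b (hab ▸ h)
      exact hne (h2 (walk_length_one_unique la lb))
  have hsub : ∀ a ∈ (Finset.univ : Finset (Fin k)),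
      f a ∈ ({none, some (i+1), some (i-1)} : Finset (Option (Fin m))) := by
    intro a _
    have := (adj_some_iff hm i (f a)).mp (hadj a)
    simp only [Finset.mem_insert, Finset.mem_singleton]
    tauto
  have hcard := Finset.card_le_card_of_injOn f hsub hinj.injOn
  rw [Finset.card_univ, Fintype.card_fin] at hcard
  calc k ≤ ({none, some (i+1), some (i-1)} : Finset (Option (Fin m))).card := hcard
    _ ≤ ({some (i+1), some (i-1)} : Finset (Option (Fin m))).card + 1 :=
        Finset.card_insert_le _ _
    _ ≤ (({some (i-1)} : Finset (Option (Fin m))).card + 1) + 1 := by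
        have := Finset.card_insert_le (some (i+1)) ({some (i-1)} : Finset (Option (Fin m)))
        omega
    _ ≤ 3 := by simp

end WheelAux

theorem wheel_uc_aux (n : ℕ) (hn : 4 ≤ n) :
    UniformlyConnected 3 (Wheel (n - 1)) := by
  set m := n - 1 with hmdef
  have hm : 3 ≤ m := by omega
  haveI : NeZero m := ⟨by omega⟩
  constructor
  · rw [Fintype.card_option, Fintype.card_fin]
    omega
  · intro u v huv
    constructor
    · -- existence
      match u, v with
      | none, none => exact absurd rfl huv
      | none, some j => exact WheelAux.exists_family_none_some hm j
      | some i, none =>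
        obtain ⟨W, hW⟩ := WheelAux.exists_family_none_some hm i
        exact ⟨fun a => (W a).reverse, (WheelAux.IsIndepPathFamily.rev hW)⟩
      | some i, some j =>
        exact WheelAux.exists_family_some_some hm i j (by simpa using huv)
    · -- upper bound
      rintro k ⟨W, hW⟩
      match u, v with
      | none, none => exact absurd rfl huv
      | none, some j =>
        exact WheelAux.bound_some hm j none (by simp) k (fun a => (W a).reverse) (WheelAux.IsIndepPathFamily.rev hW)
      | some i, v =>
        exact WheelAux.bound_some hm i v huv k W hW


/-- For every `n ≥ 4`, the wheel graph `W_n` on `n` vertices (here `Wheel (n - 1)`) is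
uniformly 3-connected. -/
theorem wheel_uniformlyThreeConnected (n : ℕ) (hn : 4 ≤ n) :
    UniformlyConnected 3 (Wheel (n - 1)) :=
  wheel_uc_aux n hn
end

section
/- Performing a primary spoke operation on the wheel graph W_4 results in a graph isomorphic to W_5, and for every n ≥ 5, performing a secondary spoke operation on the wheel graph W_n (with x chosen as the hub, i.e., the unique vertex of degree greater than 3) results in a graph isomorphic to W_{n+1}. -/
open SimpleGraph

/-- Hypotheses of the spoke operation: `v`, `w`, `x` are distinct, `vw` is an edge,
and every vertex other than possibly `x` has degree 3. -/
def SpokeHyp {V : Type*} (G : SimpleGraph V) (v w x : V) : Prop :=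
  v ≠ w ∧ v ≠ x ∧ w ≠ x ∧ G.Adj v w ∧ ∀ z : V, z ≠ x → vdeg G z = 3

/-- The spoke operation: `G + y − vw + vy + wy + xy`, where the new vertex `y`
is `Sum.inr ()`. -/
def SpokeGraph {V : Type*} (G : SimpleGraph V) (v w x : V) : SimpleGraph (V ⊕ Unit) :=
  SimpleGraph.fromRel (fun p q =>
    match p, q with
    | Sum.inl a, Sum.inl b => G.Adj a b ∧ ¬(a = v ∧ b = w) ∧ ¬(a = w ∧ b = v)
    | Sum.inl a, Sum.inr _ => a = v ∨ a = w ∨ a = x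
    | Sum.inr _, _ => False)
lemma mod_succ_cases {m x : ℕ} (h : x < m) :
    (x + 1) % m = 0 ∧ x + 1 = m ∨ (x + 1) % m = x + 1 ∧ x + 1 < m := by
  rcases Nat.lt_or_ge (x + 1) m with h' | h'
  · right; exact ⟨Nat.mod_eq_of_lt h', h'⟩
  · left; have hx : x + 1 = m := by omega
    simp [hx]

@[simp] lemma wheel_adj_none_some {m : ℕ} (j : Fin m) :
    (Wheel m).Adj none (some j) := by
  simp [Wheel, SimpleGraph.fromRel_adj]

@[simp] lemma wheel_adj_some_none {m : ℕ} (j : Fin m) :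
    (Wheel m).Adj (some j) none := by
  simp [Wheel, SimpleGraph.fromRel_adj]

@[simp] lemma wheel_not_adj_none_none {m : ℕ} :
    ¬ (Wheel m).Adj (none : Option (Fin m)) none := by
  simp [Wheel, SimpleGraph.fromRel_adj]

lemma wheel_some_adj {m : ℕ} (i j : Fin m) :
    (Wheel m).Adj (some i) (some j) ↔ (i : ℕ) ≠ (j : ℕ) ∧
      ((j : ℕ) = (i : ℕ) + 1 ∨ ((i : ℕ) + 1 = m ∧ (j : ℕ) = 0) ∨
       (i : ℕ) = (j : ℕ) + 1 ∨ ((j : ℕ) + 1 = m ∧ (i : ℕ) = 0)) := by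
  have hi := i.isLt; have hj := j.isLt
  simp only [Wheel, SimpleGraph.fromRel_adj, ne_eq, Option.some.injEq, Fin.ext_iff]
  rcases mod_succ_cases hi with ⟨h1, h1'⟩ | ⟨h1, h1'⟩ <;>
    rcases mod_succ_cases hj with ⟨h2, h2'⟩ | ⟨h2, h2'⟩ <;>
      rw [h1, h2] <;> omega

lemma spoke_adj_inl_inl {V : Type*} (G : SimpleGraph V) (v w x p q : V) :
    (SpokeGraph G v w x).Adj (Sum.inl p) (Sum.inl q) ↔
      G.Adj p q ∧ ¬(p = v ∧ q = w) ∧ ¬(p = w ∧ q = v) := by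
  simp only [SpokeGraph, SimpleGraph.fromRel_adj, ne_eq, Sum.inl.injEq]
  constructor
  · rintro ⟨hne, h | h⟩
    · exact h
    · exact ⟨h.1.symm, fun hc => h.2.2 ⟨hc.2, hc.1⟩, fun hc => h.2.1 ⟨hc.2, hc.1⟩⟩
  · rintro ⟨h1, h2, h3⟩
    exact ⟨h1.ne, Or.inl ⟨h1, h2, h3⟩⟩

lemma spoke_adj_inl_inr {V : Type*} (G : SimpleGraph V) (v w x p : V) (u : Unit) :
    (SpokeGraph G v w x).Adj (Sum.inl p) (Sum.inr u) ↔ p = v ∨ p = w ∨ p = x := by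
  simp [SpokeGraph, SimpleGraph.fromRel_adj]

lemma spoke_adj_inr_inl {V : Type*} (G : SimpleGraph V) (v w x p : V) (u : Unit) :
    (SpokeGraph G v w x).Adj (Sum.inr u) (Sum.inl p) ↔ p = v ∨ p = w ∨ p = x := by
  simp [SpokeGraph, SimpleGraph.fromRel_adj]

@[simp] lemma spoke_not_adj_inr_inr {V : Type*} (G : SimpleGraph V) (v w x : V) (u u' : Unit) :
    ¬ (SpokeGraph G v w x).Adj (Sum.inr u) (Sum.inr u') := by
  simp [SpokeGraph, SimpleGraph.fromRel_adj]

lemma spoke_swap {V : Type*} (G : SimpleGraph V) (v w x : V) :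
    SpokeGraph G v w x = SpokeGraph G w v x := by
  ext p q
  rcases p with p | u <;> rcases q with q | u'
  · rw [spoke_adj_inl_inl, spoke_adj_inl_inl]; tauto
  · rw [spoke_adj_inl_inr, spoke_adj_inl_inr]; tauto
  · rw [spoke_adj_inr_inl, spoke_adj_inr_inl]; tauto
  · simp

lemma spoke_congr {V W : Type*} {G : SimpleGraph V} {H : SimpleGraph W} (φ : G ≃g H)
    (v w x : V) :
    Nonempty (SpokeGraph G v w x ≃g SpokeGraph H (φ v) (φ w) (φ x)) := by
  refine ⟨⟨Equiv.sumCongr φ.toEquiv (Equiv.refl Unit), ?_⟩⟩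
  intro p q
  rcases p with p | u <;> rcases q with q | u'
  · rw [Equiv.sumCongr_apply, Equiv.sumCongr_apply]
    simp only [Sum.map_inl, spoke_adj_inl_inl]
    show H.Adj (φ p) (φ q) ∧ _ ↔ _
    rw [φ.map_adj_iff]
    simp [EmbeddingLike.apply_eq_iff_eq]
  · simp [spoke_adj_inl_inr, EmbeddingLike.apply_eq_iff_eq]
  · simp [spoke_adj_inr_inl, EmbeddingLike.apply_eq_iff_eq]
  · simp

lemma vdeg_wheel_none {m : ℕ} : vdeg (Wheel m) none = m := by
  have h : (Wheel m).neighborSet none = Set.range some := by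
    ext p
    cases p <;> simp [SimpleGraph.neighborSet, Wheel, SimpleGraph.fromRel_adj]
  rw [vdeg, h, ← Set.image_univ, Set.ncard_image_of_injective _ (Option.some_injective _),
    Set.ncard_univ, Nat.card_eq_fintype_card, Fintype.card_fin]

def fwd {m : ℕ} (a : Fin m) : Option (Fin m) ⊕ Unit → Option (Fin (m + 1))
  | Sum.inl none => none
  | Sum.inl (some i) =>
      some ⟨if (i : ℕ) = (a : ℕ) then 0
            else if (a : ℕ) < (i : ℕ) then (i : ℕ) - (a : ℕ) + 1
            else (i : ℕ) + m - (a : ℕ) + 1,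
        by have h1 := i.isLt; have h2 := a.isLt; split_ifs <;> omega⟩
  | Sum.inr _ => some ⟨1, by have := a.isLt; omega⟩

lemma fwd_bij {m : ℕ} (a : Fin m) : Function.Bijective (fwd a) := by
  rw [Fintype.bijective_iff_injective_and_card]
  refine ⟨?_, by simp⟩
  have ha := a.isLt
  rintro ((_ | i) | u) ((_ | j) | u') h <;>
    simp only [fwd, Option.some.injEq, Fin.mk.injEq, reduceCtorEq] at h ⊢
  · have hi := i.isLt; have hj := j.isLt
    have : (i : ℕ) = (j : ℕ) := by split_ifs at h <;> omega
    simp [Fin.ext_iff, this]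
  · have hi := i.isLt
    exfalso; split_ifs at h <;> omega
  · have hj := j.isLt
    exfalso; split_ifs at h <;> omega

lemma spoke_wheel_main {m : ℕ} (hm : 3 ≤ m) (a b : Fin m)
    (hb : (b : ℕ) = (a : ℕ) + 1 ∨ ((a : ℕ) + 1 = m ∧ (b : ℕ) = 0)) :
    Nonempty (SpokeGraph (Wheel m) (some a) (some b) none ≃g Wheel (m + 1)) := by
  have ha := a.isLt; have hb' := b.isLt
  refine ⟨⟨Equiv.ofBijective (fwd a) (fwd_bij a), ?_⟩⟩
  intro p q
  show (Wheel (m + 1)).Adj (fwd a p) (fwd a q) ↔ _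
  rcases p with (_ | i) | u <;> rcases q with (_ | j) | u'
  · simp [fwd, spoke_adj_inl_inl]
  · simp [fwd, spoke_adj_inl_inl]
  · simp [fwd, spoke_adj_inl_inr]
  · simp [fwd, spoke_adj_inl_inl]
  · -- some i, some j
    simp only [fwd]
    rw [wheel_some_adj, spoke_adj_inl_inl, wheel_some_adj]
    have hi := i.isLt; have hj := j.isLt
    simp only [Option.some.injEq, Fin.ext_iff, Fin.val_mk]
    split_ifs <;> first | omega | (simp only [eq_self_iff_true, not_true, not_false_iff, false_and, and_false, false_or, or_false, and_true, true_and, ne_eq, not_false_eq_true, true_or, or_true]; omega)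
  · -- some i, inr
    simp only [fwd, spoke_adj_inl_inr]
    rw [wheel_some_adj]
    have hi := i.isLt
    simp only [Fin.ext_iff, Fin.val_mk, Option.some.injEq, reduceCtorEq, or_false]
    split_ifs <;> first | omega | (simp only [eq_self_iff_true, not_true, not_false_iff, false_and, and_false, false_or, or_false, and_true, true_and, ne_eq, not_false_eq_true, true_or, or_true]; omega)
  · simp [fwd, spoke_adj_inr_inl]
  · -- inr, some j
    simp only [fwd, spoke_adj_inr_inl]
    rw [wheel_some_adj]
    have hj := j.isLt
    simp only [Fin.ext_iff, Fin.val_mk, Option.some.injEq, reduceCtorEq, or_false]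
    split_ifs <;> first | omega | (simp only [eq_self_iff_true, not_true, not_false_iff, false_and, and_false, false_or, or_false, and_true, true_and, ne_eq, not_false_eq_true, true_or, or_true]; omega)
  · simp only [fwd]
    rw [wheel_some_adj]
    simp

lemma spoke_wheel_main2 {m : ℕ} (hm : 3 ≤ m) (a b : Fin m)
    (hadj : (Wheel m).Adj (some a) (some b)) :
    Nonempty (SpokeGraph (Wheel m) (some a) (some b) none ≃g Wheel (m + 1)) := by
  rw [wheel_some_adj] at hadj
  obtain ⟨hne, h⟩ := hadj
  rcases h with h | h | h | h
  · exact spoke_wheel_main hm a b (Or.inl h)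
  · exact spoke_wheel_main hm a b (Or.inr h)
  · rw [spoke_swap]; exact spoke_wheel_main hm b a (Or.inl h)
  · rw [spoke_swap]; exact spoke_wheel_main hm b a (Or.inr h)

lemma wheel3_ne_adj (p q : Option (Fin 3)) : (Wheel 3).Adj p q ↔ p ≠ q := by
  rcases p with _ | i <;> rcases q with _ | j
  · simp
  · simp
  · simp
  · rw [wheel_some_adj]
    have hi := i.isLt; have hj := j.isLt
    simp only [ne_eq, Option.some.injEq, Fin.ext_iff]
    omega


/-- Performing a primary spoke operation on the wheel `W_4 = Wheel 3` results in a graph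
isomorphic to `W_5 = Wheel 4`, and for every `n ≥ 5`, performing a secondary spoke operation
on `W_n = Wheel (n-1)` with `x` the hub (the unique vertex of degree greater than three)
results in a graph isomorphic to `W_{n+1} = Wheel n`. -/
theorem spoke_wheel :
    (∀ v w x : Option (Fin 3), SpokeHyp (Wheel 3) v w x → vdeg (Wheel 3) x = 3 →
      Nonempty (SpokeGraph (Wheel 3) v w x ≃g Wheel 4)) ∧
    (∀ n : ℕ, 5 ≤ n → ∀ v w x : Option (Fin (n - 1)),
      SpokeHyp (Wheel (n - 1)) v w x → 3 < vdeg (Wheel (n - 1)) x →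
      Nonempty (SpokeGraph (Wheel (n - 1)) v w x ≃g Wheel n)) := by
  constructor
  · intro v w x hyp _
    obtain ⟨hvw, hvx, hwx, hadj, -⟩ := hyp
    obtain ⟨ψ⟩ := spoke_congr (G := Wheel 3) (H := Wheel 3)
      ⟨Equiv.swap x none, by
        intro p q
        rw [wheel3_ne_adj, wheel3_ne_adj]
        simp⟩ v w x
    simp only [RelIso.coe_fn_mk] at ψ
    have hx : Equiv.swap x none x = none := Equiv.swap_apply_left x none
    rw [hx] at ψ
    have hv : Equiv.swap x none v ≠ none := fun h =>
      hvx ((Equiv.swap x none).injective (h.trans hx.symm))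
    have hw : Equiv.swap x none w ≠ none := fun h =>
      hwx ((Equiv.swap x none).injective (h.trans hx.symm))
    obtain ⟨a, ha⟩ := Option.ne_none_iff_exists'.1 hv
    obtain ⟨b, hb⟩ := Option.ne_none_iff_exists'.1 hw
    rw [ha, hb] at ψ
    have hab : (Wheel 3).Adj (some a) (some b) := by
      rw [wheel3_ne_adj, ← ha, ← hb]
      intro h
      exact hvw ((Equiv.swap x none).injective h)
    obtain ⟨χ⟩ := spoke_wheel_main2 (by norm_num) a b hab
    exact ⟨ψ.trans χ⟩
  · intro n hn v w x hyp hxdeg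
    obtain ⟨hvw, hvx, hwx, hadj, hdeg⟩ := hyp
    obtain ⟨m, rfl⟩ : ∃ m, n = m + 1 := ⟨n - 1, by omega⟩
    have hm : 4 ≤ m := by omega
    have hx : x = none := by
      by_contra hxx
      have h1 : vdeg (Wheel (m + 1 - 1)) none = m + 1 - 1 := vdeg_wheel_none
      have h2 := hdeg none (fun h => hxx h.symm)
      omega
    subst hx
    obtain ⟨a, ha⟩ := Option.ne_none_iff_exists'.1 hvx
    obtain ⟨b, hb⟩ := Option.ne_none_iff_exists'.1 hwx
    rw [ha, hb] at hadj ⊢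
    exact spoke_wheel_main2 (by omega) a b hadj
end
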